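/- Let V be a finite set, and for each v ∈ V let P_v be a group with normal subgroup T_v free abelian of finite rank; set P = ∏ P_v and T = ∏ T_v. Let p be a prime and Z ≤ T a subgroup such that T/Z has no q-torsion for any prime q ≠ p. If P_v/nT_v is residually p-finite for every v and every sufficiently large power n of p, then Z is closed in the pro-p topology on P; in particular, if Z is normal in P then P/Z is residually p-finite. -/

import Mathlib

/-- A subset `S` of a group `G` is closed in the pro-`p` topology on `G`
(whose basic neighbourhoods of the identity are the normal subgroups of `p`-power
index). -/
def ProPClosed (p : ℕ) (G : Type*) [Group G] (S : Set G) : Prop :=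
  ∀ g ∉ S, ∃ K : Subgroup G, K.Normal ∧ (∃ k : ℕ, K.index = p ^ k) ∧ ∀ x ∈ K, g * x ∉ S

/-- For a normal subgroup with underlying set `S`, this says exactly that the quotient
`G/S` is residually `p`-finite. -/
def QuotientResiduallyPFinite (p : ℕ) (G : Type*) [Group G] (S : Set G) : Prop :=
  ∀ x ∉ S, ∃ (K : Type) (_ : Group K) (_ : Finite K), IsPGroup p K ∧
    ∃ φ : G →* K, (∀ y ∈ S, φ y = 1) ∧ φ x ≠ 1


open scoped Pointwise

lemma lemA' (p : ℕ) (hp : p.Prime) (A : Type*) [CommGroup A] (hfg : Group.FG A)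
    (htor : ∀ q : ℕ, q.Prime → q ≠ p → ∀ a : A, a ^ q = 1 → a = 1)
    (a : A) (ha : a ≠ 1) : ∃ k : ℕ, ∀ b : A, a ≠ b ^ (p ^ k) := by
  classical
  haveI : AddGroup.FG (Additive A) := GroupFG.iff_add_fg.mp hfg
  obtain ⟨n, ι, fι, pr, hpr, e, ⟨φ⟩⟩ :=
    AddCommGroup.equiv_free_prod_directSum_zmod (Additive A)
  -- translation: powers vs smul
  have key : ∀ (k : ℕ), (∀ w : (Fin n →₀ ℤ) × DirectSum ι fun j => ZMod (pr j ^ e j),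
      φ (Additive.ofMul a) ≠ p ^ k • w) → ∀ b : A, a ≠ b ^ (p ^ k) := by
    intro k hk b hab
    apply hk (φ (Additive.ofMul b))
    rw [← map_nsmul, hab, ofMul_pow]
  -- all torsion primes are p
  have hq : ∀ i, e i ≠ 0 → pr i = p := by
    intro i hei
    by_contra hne
    haveI : NeZero (pr i ^ e i) := ⟨pow_ne_zero _ (hpr i).ne_zero⟩
    have hx : ((pr i ^ (e i - 1) : ℕ) : ZMod (pr i ^ e i)) ≠ 0 := by
      rw [Ne, ZMod.natCast_eq_zero_iff]
      intro hdvd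
      have h1 := Nat.le_of_dvd (Nat.pow_pos (hpr i).pos) hdvd
      have h2 : pr i ^ (e i - 1) < pr i ^ e i :=
        Nat.pow_lt_pow_right (hpr i).one_lt (by omega)
      omega
    set x : DirectSum ι (fun j => ZMod (pr j ^ e j)) :=
      DirectSum.of (fun j => ZMod (pr j ^ e j)) i ((pr i ^ (e i - 1) : ℕ) : ZMod (pr i ^ e i))
      with hxdef
    have hx0 : x ≠ 0 := by
      intro h
      apply hx
      have := DFinsupp.ext_iff.mp h i
      rwa [hxdef, DirectSum.of_eq_same] at this
    set b : Additive A := φ.symm (0, x) with hb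
    have hb0 : b ≠ 0 := by
      rw [hb]
      intro h
      rw [← map_zero φ.symm, φ.symm.injective.eq_iff, Prod.ext_iff] at h
      exact hx0 h.2
    have hqb : pr i • b = 0 := by
      have hxx : pr i • x = 0 := by
        rw [hxdef, ← map_nsmul]
        have h3 : pr i • ((pr i ^ (e i - 1) : ℕ) : ZMod (pr i ^ e i)) = 0 := by
          rw [nsmul_eq_mul, ← Nat.cast_mul, ← pow_succ']
          have h5 : e i - 1 + 1 = e i := by omega
          rw [h5, ZMod.natCast_self]
        rw [h3, map_zero]
      rw [hb, ← map_nsmul, Prod.smul_def, smul_zero, hxx,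
        show ((0, 0) : (Fin n →₀ ℤ) × DirectSum ι fun j => ZMod (pr j ^ e j)) = 0 from rfl,
        map_zero]
    have h4 : Additive.toMul b ^ pr i = 1 := by
      rw [← toMul_nsmul, hqb, toMul_zero]
    have := htor (pr i) (hpr i) hne (Additive.toMul b) h4
    rw [← toMul_zero, Additive.toMul.apply_eq_iff_eq] at this
    exact hb0 this
  set w := φ (Additive.ofMul a) with hw
  have hw0 : w ≠ 0 := by
    rw [hw]
    intro h
    rw [← map_zero φ, φ.injective.eq_iff, ofMul_eq_zero] at h
    exact ha h
  by_cases hx : w.1 = 0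
  · -- torsion case
    have hy : w.2 ≠ 0 := fun h => hw0 (Prod.ext hx h)
    obtain ⟨j, hj⟩ : ∃ j, w.2 j ≠ 0 := by
      by_contra h
      push_neg at h
      exact hy (DFinsupp.ext h)
    have hej : e j ≠ 0 := by
      intro h0
      apply hj
      haveI : Subsingleton (ZMod (pr j ^ e j)) := by
        rw [h0, pow_zero]
        infer_instance
      exact Subsingleton.elim _ _
    refine ⟨e j, key _ ?_⟩
    intro v hv
    apply hj
    have h1 : w.2 j = (p ^ e j • v).2 j := by rw [← hv]
    rw [Prod.smul_def, DFinsupp.smul_apply, nsmul_eq_mul] at h1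
    have h2 : ((p ^ e j : ℕ) : ZMod (pr j ^ e j)) = 0 := by
      rw [← hq j hej, ZMod.natCast_self]
    rw [h1, h2, zero_mul]
  · -- free case
    obtain ⟨j, hj⟩ : ∃ j, w.1 j ≠ 0 := by
      by_contra h
      push_neg at h
      exact hx (Finsupp.ext h)
    set K := (w.1 j).natAbs with hK
    refine ⟨K, key _ ?_⟩
    intro v hv
    have h1 : w.1 j = ((p : ℤ) ^ K) * (v.1 j) := by
      rw [hv, Prod.smul_def, Finsupp.smul_apply, nsmul_eq_mul]
      push_cast
      ring
    have hd : (p : ℤ) ^ K ∣ w.1 j := ⟨v.1 j, h1⟩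
    have hd2 : p ^ K ∣ K := by
      rw [hK]
      have := Int.natAbs_dvd_natAbs.mpr hd
      rwa [Int.natAbs_pow, Int.natAbs_natCast] at this
    have h3 : p ^ K ≤ K := Nat.le_of_dvd (by rw [hK]; exact Int.natAbs_pos.mpr hj) hd2
    have h4 : K < 2 ^ K := Nat.lt_two_pow_self (n := K)
    have h5 : 2 ^ K ≤ p ^ K := Nat.pow_le_pow_left hp.two_le K
    omega


lemma lemB' (p : ℕ) (hp : p.Prime) (M : Type*) [CommGroup M] (hfg : Group.FG M)
    (Z : Subgroup M)
    (htor : ∀ q : ℕ, q.Prime → q ≠ p → ∀ t : M, t ^ q ∈ Z → t ∈ Z)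
    (g : M) (hg : g ∉ Z) : ∃ k : ℕ, ∀ z ∈ Z, ∀ t : M, g ≠ z * t ^ (p ^ k) := by
  haveI := hfg
  haveI : Z.Normal := Z.normal_of_comm
  have hfgA : Group.FG (M ⧸ Z) := Group.fg_of_surjective (QuotientGroup.mk'_surjective Z)
  have htorA : ∀ q : ℕ, q.Prime → q ≠ p → ∀ a : M ⧸ Z, a ^ q = 1 → a = 1 := by
    intro q hq hqp a haq
    obtain ⟨t, rfl⟩ := QuotientGroup.mk'_surjective Z a
    rw [QuotientGroup.mk'_apply] at *
    rw [show (t : M ⧸ Z) ^ q = ((t ^ q : M) : M ⧸ Z) from rfl,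
      QuotientGroup.eq_one_iff] at haq
    rw [QuotientGroup.eq_one_iff]
    exact htor q hq hqp t haq
  have hga : ((g : M ⧸ Z)) ≠ 1 := by
    rw [Ne, QuotientGroup.eq_one_iff]
    exact hg
  obtain ⟨k, hk⟩ := lemA' p hp (M ⧸ Z) hfgA htorA _ hga
  refine ⟨k, fun z hz t het => hk ((t : M ⧸ Z)) ?_⟩
  have h1 : ((z : M ⧸ Z)) = 1 := (QuotientGroup.eq_one_iff z).mpr hz
  calc ((g : M ⧸ Z)) = ((z * t ^ p ^ k : M) : M ⧸ Z) := by rw [het]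
    _ = ((z : M ⧸ Z)) * ((t : M ⧸ Z)) ^ (p ^ k) := rfl
    _ = ((t : M ⧸ Z)) ^ (p ^ k) := by rw [h1, one_mul]

lemma isPGroup_pi {p : ℕ} {ι : Type*} [Finite ι] (Q : ι → Type*) [∀ i, Group (Q i)]
    (h : ∀ i, IsPGroup p (Q i)) : IsPGroup p (∀ i, Q i) := by
  cases nonempty_fintype ι
  intro g
  choose n hn using fun i => h i (g i)
  refine ⟨Finset.univ.sup n, ?_⟩
  funext i
  have hle : n i ≤ Finset.univ.sup n := Finset.le_sup (Finset.mem_univ i)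
  have h2 : p ^ Finset.univ.sup n = p ^ n i * p ^ (Finset.univ.sup n - n i) := by
    rw [← pow_add]
    congr 1
    omega
  calc (g ^ p ^ Finset.univ.sup n) i = (g i) ^ p ^ Finset.univ.sup n := rfl
    _ = ((g i) ^ p ^ n i) ^ p ^ (Finset.univ.sup n - n i) := by rw [h2, pow_mul]
    _ = 1 := by rw [hn i, one_pow]

lemma shrinkHom {p : ℕ} {G : Type*} [Group G] (Q : Type*) [Group Q] [Finite Q]
    (hP : IsPGroup p Q) (φ : G →* Q) :
    ∃ (K : Type) (_ : Group K) (_ : Finite K), IsPGroup p K ∧ ∃ ψ : G →* K,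
      ∀ x : G, (ψ x = 1 ↔ φ x = 1) := by
  obtain ⟨K, _, _, ⟨e⟩⟩ := Finite.exists_type_univ_nonempty_mulEquiv.{_, 0} Q
  exact ⟨K, _, Finite.of_equiv Q e.toEquiv, hP.of_equiv e, e.toMonoidHom.comp φ,
    fun x => by simp [MulEquiv.map_eq_one_iff]⟩

lemma lemC (p k : ℕ) (hp : p.Prime) {G : Type*} [Group G] (H : Subgroup G)
    (hfree : ∃ n : ℕ, Nonempty (H ≃* Multiplicative (Fin n → ℤ)))
    (hRF : QuotientResiduallyPFinite p G {x | ∃ g ∈ H, g ^ (p ^ k) = x})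
    (g₀ : G) :
    ∃ (Q : Type) (_ : Group Q) (_ : Finite Q), IsPGroup p Q ∧ ∃ φ : G →* Q,
      (∀ t ∈ H, φ t = 1 → ∃ u ∈ H, u ^ (p ^ k) = t) ∧
      (g₀ ∉ H → ∀ t ∈ H, φ g₀ ≠ φ t) := by
  classical
  obtain ⟨n, ⟨eH⟩⟩ := hfree
  set Pow : Set G := {x | ∃ g ∈ H, g ^ (p ^ k) = x} with hPow
  have hPowH : ∀ x ∈ Pow, x ∈ H := by
    rintro x ⟨u, hu, rfl⟩
    exact pow_mem hu _
  have hcomm : ∀ x y : G, x ∈ H → y ∈ H → x * y = y * x := by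
    intro x y hx hy
    have h1 := mul_comm (eH ⟨x, hx⟩) (eH ⟨y, hy⟩)
    rw [← map_mul, ← map_mul] at h1
    exact congrArg Subtype.val (eH.injective h1)
  -- detector for every element
  have D : ∀ x : G, ∃ (Q : Type) (_ : Group Q) (_ : Finite Q), IsPGroup p Q ∧
      ∃ φ : G →* Q, (∀ y ∈ Pow, φ y = 1) ∧ (x ∉ Pow → φ x ≠ 1) := by
    intro x
    by_cases hx : x ∈ Pow
    · exact ⟨PUnit, inferInstance, inferInstance, fun g => ⟨0, Subsingleton.elim _ _⟩,
        1, fun y _ => rfl, fun h => absurd hx h⟩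
    · obtain ⟨Q, i1, i2, hQ, φ, h1, h2⟩ := hRF x hx
      exact ⟨Q, i1, i2, hQ, φ, h1, fun _ => h2⟩
  choose Qd iG iF hPG φd hker hdet using D
  -- coset representatives
  have hm : (0:ℤ) < (p:ℤ) ^ k := by have := hp.pos; positivity
  have C0 : ∃ R : Set G, R.Finite ∧ (∀ s ∈ R, s ∈ H) ∧
      ∀ t ∈ H, ∃ s ∈ R, ∃ u ∈ H, t = s * u ^ (p ^ k) := by
    set S₀ : Set (Fin n → ℤ) := Set.pi Set.univ (fun _ => Set.Ico (0:ℤ) ((p:ℤ) ^ k))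
      with hS₀def
    have hS₀ : S₀.Finite := Set.Finite.pi (fun _ => Set.finite_Ico _ _)
    refine ⟨(fun f => ((eH.symm (Multiplicative.ofAdd f)) : G)) '' S₀, hS₀.image _, ?_, ?_⟩
    · rintro s ⟨f, -, rfl⟩
      exact (eH.symm _).2
    · intro t ht
      set f : Fin n → ℤ := Multiplicative.toAdd (eH ⟨t, ht⟩) with hf
      set r : Fin n → ℤ := fun i => f i % ((p:ℤ) ^ k) with hr
      set b : Fin n → ℤ := fun i => f i / ((p:ℤ) ^ k) with hb
      have hrS : r ∈ S₀ := by
        intro i _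
        exact ⟨Int.emod_nonneg _ hm.ne', Int.emod_lt_of_pos _ hm⟩
      refine ⟨_, ⟨r, hrS, rfl⟩, (eH.symm (Multiplicative.ofAdd b) : G),
        (eH.symm _).2, ?_⟩
      have key : (⟨t, ht⟩ : H) =
          eH.symm (Multiplicative.ofAdd r) * (eH.symm (Multiplicative.ofAdd b)) ^ (p ^ k) := by
        apply eH.injective
        rw [map_mul, map_pow, MulEquiv.apply_symm_apply, MulEquiv.apply_symm_apply,
          ← ofAdd_nsmul, ← ofAdd_add]
        have hfr : r + (p ^ k : ℕ) • b = f := by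
          funext i
          have := Int.emod_add_mul_ediv (f i) ((p:ℤ) ^ k)
          simp only [hr, hb, Pi.add_apply, Pi.smul_apply]
          rw [nsmul_eq_mul]
          push_cast
          linarith [this]

        rw [hfr, hf]
        simp
      exact congrArg Subtype.val key
  obtain ⟨R, hRfin, hRH, hrep⟩ := C0
  -- index set
  set S : Set G := R ∪ (fun s => g₀ * s⁻¹) '' R with hS
  have hSfin : S.Finite := hRfin.union (hRfin.image _)
  haveI : Finite S := hSfin
  letI : ∀ s : S, Group (Qd s) := fun s => iG s
  haveI : ∀ s : S, Finite (Qd s) := fun s => iF s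
  set Φ : G →* ∀ s : S, Qd s := Pi.monoidHom (fun s => φd s) with hΦ
  obtain ⟨K, i1, i2, hK, ψ, hψ⟩ :=
    shrinkHom _ (isPGroup_pi _ (fun s : S => hPG s)) Φ
  refine ⟨K, i1, i2, hK, ψ, ?_, ?_⟩
  · -- kernel property
    intro t ht hψt
    have hΦt : Φ t = 1 := (hψ t).mp hψt
    obtain ⟨s, hsR, u, huH, rfl⟩ := hrep t ht
    have hsS : s ∈ S := Or.inl hsR
    have h1 : φd s (s * u ^ p ^ k) = 1 := congrFun hΦt ⟨s, hsS⟩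
    have h2 : φd s (u ^ p ^ k) = 1 := hker s _ ⟨u, huH, rfl⟩
    rw [map_mul, h2, mul_one] at h1
    have hsPow : s ∈ Pow := by
      by_contra hns
      exact hdet s hns h1
    obtain ⟨w, hwH, rfl⟩ := hsPow
    refine ⟨w * u, mul_mem hwH huH, ?_⟩
    exact Commute.mul_pow (hcomm w u hwH huH) _
  · -- separation property
    intro hg₀ t ht heq
    have hΦeq : Φ (g₀ * t⁻¹) = 1 := by
      rw [← hψ]
      rw [map_mul, map_inv, heq, mul_inv_cancel]
    obtain ⟨s, hsR, u, huH, rfl⟩ := hrep t ht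
    set x : G := g₀ * s⁻¹ with hx
    have hxS : x ∈ S := Or.inr ⟨s, hsR, rfl⟩
    have hxPow : x ∉ Pow := by
      rintro ⟨w, hwH, hw⟩
      apply hg₀
      have : g₀ = w ^ p ^ k * s := by rw [hw, hx]; group
      rw [this]
      exact mul_mem (pow_mem hwH _) (hRH s hsR)
    have hc : s * (u⁻¹) ^ (p ^ k) * s⁻¹ ∈ Pow := by
      refine ⟨s * u⁻¹ * s⁻¹, ?_, ?_⟩
      · exact mul_mem (mul_mem (hRH s hsR) (inv_mem huH)) (inv_mem (hRH s hsR))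
      · rw [conj_pow]
    have hdecomp : g₀ * (s * u ^ p ^ k)⁻¹ = x * (s * (u⁻¹) ^ (p ^ k) * s⁻¹) := by
      rw [hx]
      group
    have h1 : φd x (g₀ * (s * u ^ p ^ k)⁻¹) = 1 := congrFun hΦeq ⟨x, hxS⟩
    rw [hdecomp, map_mul, hker x _ hc, mul_one] at h1
    exact hdet x hxPow h1

lemma part2 (p : ℕ) (hp : p.Prime) {G : Type*} [Group G] (Z : Subgroup G)
    (h1 : ProPClosed p G (Z : Set G)) (hZ : Z.Normal) :
    QuotientResiduallyPFinite p G (Z : Set G) := by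
  haveI : Fact p.Prime := ⟨hp⟩
  intro g hg
  obtain ⟨K, hKn, ⟨k, hKi⟩, hsep⟩ := h1 g hg
  haveI := hKn
  haveI := hZ
  set N := Z ⊔ K with hN
  haveI : N.Normal := Subgroup.sup_normal Z K
  have hNi : N.index ∣ p ^ k := hKi ▸ Subgroup.index_dvd_of_le le_sup_right
  obtain ⟨j, hjk, hj⟩ := (Nat.dvd_prime_pow hp).mp hNi
  have hne : N.index ≠ 0 := by rw [hj]; exact (pow_pos hp.pos j).ne'
  rw [Subgroup.index_eq_card] at hne hj
  haveI : Finite (G ⧸ N) := Nat.finite_of_card_ne_zero hne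
  have hPG : IsPGroup p (G ⧸ N) := (IsPGroup.iff_card).mpr ⟨j, hj⟩
  obtain ⟨Q, i1, i2, hQ, ψ, hψ⟩ := shrinkHom _ hPG (QuotientGroup.mk' N)
  refine ⟨Q, i1, i2, hQ, ψ, ?_, ?_⟩
  · intro y hy
    rw [hψ, QuotientGroup.mk'_apply, QuotientGroup.eq_one_iff]
    exact Subgroup.mem_sup_left hy
  · rw [Ne, hψ, QuotientGroup.mk'_apply, QuotientGroup.eq_one_iff]
    intro hgN
    have hmem : g ∈ ((Z : Set G) * (K : Set G)) := by
      rw [← Subgroup.mul_normal]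
      exact hgN
    obtain ⟨z, hz, x, hx, rfl⟩ := hmem
    exact hsep x⁻¹ (inv_mem hx) (by rwa [mul_inv_cancel_right])

/-- Let `V` be a finite set and, for `v ∈ V`, let `P v` be a group with a normal subgroup
`T v` which is free abelian of finite rank; let `P = ∏ P v` and `T = ∏ T v ≤ P`.
Let `p` be a prime and `Z ≤ T` a subgroup such that `T/Z` has no `q`-torsion for any
prime `q ≠ p`. If `P v / n(T v)` is residually `p`-finite for every `v` and every
sufficiently large power `n` of `p`, then `Z` is closed in the pro-`p` topology on `P`;
in particular, if `Z` is normal in `P` then `P/Z` is residually `p`-finite. -/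
theorem stmt16 (p : ℕ) (hp : p.Prime) {V : Type*} [Finite V]
    (P : V → Type*) [∀ v, Group (P v)]
    (T : ∀ v, Subgroup (P v)) (hTnorm : ∀ v, (T v).Normal)
    (hTfree : ∀ v, ∃ n : ℕ, Nonempty (T v ≃* Multiplicative (Fin n → ℤ)))
    (Z : Subgroup (∀ v, P v)) (hZ : Z ≤ Subgroup.pi Set.univ T)
    (htor : ∀ q : ℕ, q.Prime → q ≠ p →
      ∀ t ∈ Subgroup.pi Set.univ T, t ^ q ∈ Z → t ∈ Z)
    (hRF : ∃ k₀ : ℕ, ∀ k ≥ k₀, ∀ v,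
      QuotientResiduallyPFinite p (P v) {x | ∃ g ∈ T v, g ^ (p ^ k) = x}) :
    ProPClosed p (∀ v, P v) (Z : Set (∀ v, P v)) ∧
    (Z.Normal → QuotientResiduallyPFinite p (∀ v, P v) (Z : Set (∀ v, P v))) := by
  classical
  haveI : Fact p.Prime := ⟨hp⟩
  haveI := Fintype.ofFinite V
  obtain ⟨k₀, hk₀⟩ := hRF
  choose nn he using hTfree
  have e : ∀ v, (T v) ≃* Multiplicative (Fin (nn v) → ℤ) := fun v => (he v).some
  set T' : Subgroup (∀ v, P v) := Subgroup.pi Set.univ T with hT'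
  have hcommT : ∀ x y : (∀ v, P v), x ∈ T' → y ∈ T' → x * y = y * x := by
    intro x y hx hy
    funext v
    have h1 := mul_comm (e v ⟨x v, (Subgroup.mem_pi _).mp hx v trivial⟩)
      (e v ⟨y v, (Subgroup.mem_pi _).mp hy v trivial⟩)
    rw [← map_mul, ← map_mul] at h1
    exact congrArg Subtype.val ((e v).injective h1)
  letI instCG : CommGroup T' :=
    { (inferInstance : Group T') with
      mul_comm := fun a b => Subtype.ext (hcommT a b a.2 b.2) }
  -- finite generation of T'
  have hfgT : Group.FG T' := by
    have hfgW : Group.FG (∀ v, Multiplicative (Fin (nn v) → ℤ)) := by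
      have hM : AddGroup.FG (∀ v, Fin (nn v) → ℤ) :=
        Module.Finite.iff_addGroup_fg.mp inferInstance
      haveI : Group.FG (Multiplicative (∀ v, Fin (nn v) → ℤ)) :=
        Group.fg_of_mul_group_fg
      exact Group.fg_of_surjective (f := (MulEquiv.piMultiplicative
        (fun v => Fin (nn v) → ℤ)).toMonoidHom) (MulEquiv.piMultiplicative _).surjective
    set Ψ : (∀ v, Multiplicative (Fin (nn v) → ℤ)) →* T' :=
      { toFun := fun w => ⟨fun v => ((e v).symm (w v) : P v),
          (Subgroup.mem_pi _).mpr fun v _ => ((e v).symm (w v)).2⟩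
        map_one' := by
          apply Subtype.ext
          funext v
          simp
        map_mul' := by
          intro w w'
          apply Subtype.ext
          funext v
          have : (e v).symm (w v * w' v) = (e v).symm (w v) * (e v).symm (w' v) :=
            map_mul _ _ _
          exact congrArg Subtype.val this } with hΨ
    have hsurj : Function.Surjective Ψ := by
      intro x
      refine ⟨fun v => e v ⟨x.1 v, (Subgroup.mem_pi _).mp x.2 v trivial⟩, ?_⟩
      apply Subtype.ext
      funext v
      exact congrArg Subtype.val ((e v).symm_apply_apply _)
    exact @Group.fg_of_surjective _ _ _ _ hfgW _ hsurj
  -- torsion transfer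
  set Z' : Subgroup T' := Z.subgroupOf T' with hZ'
  have htor' : ∀ q : ℕ, q.Prime → q ≠ p → ∀ t : T', t ^ q ∈ Z' → t ∈ Z' := by
    intro q hq hqp t ht
    rw [Subgroup.mem_subgroupOf] at *
    exact htor q hq hqp (t : ∀ v, P v) t.2 ht
  -- Part 1
  have h1 : ProPClosed p (∀ v, P v) (Z : Set (∀ v, P v)) := by
    intro g hg
    -- choose a suitable exponent k
    obtain ⟨k, hk₀k, hprop⟩ : ∃ k, k₀ ≤ k ∧ ((∃ v₀, g v₀ ∉ T v₀) ∨
        (g ∈ T' ∧ ∀ z ∈ Z, ∀ t, t ∈ T' → g ≠ z * t ^ (p ^ k))) := by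
      by_cases hgT : g ∈ T'
      · obtain ⟨k₁, hk₁⟩ := lemB' p hp T' hfgT Z' htor' ⟨g, hgT⟩
          (by rw [Subgroup.mem_subgroupOf]; exact hg)
        refine ⟨max k₀ k₁, le_max_left _ _, Or.inr ⟨hgT, ?_⟩⟩
        intro z hz t ht heq
        apply hk₁ ⟨z, hZ hz⟩ (by rwa [Subgroup.mem_subgroupOf])
          ((⟨t, ht⟩ : T') ^ (p ^ (max k₀ k₁ - k₁)))
        apply Subtype.ext
        show g = z * (t ^ p ^ (max k₀ k₁ - k₁)) ^ p ^ k₁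
        have hexp : p ^ (max k₀ k₁ - k₁) * p ^ k₁ = p ^ (max k₀ k₁) := by
          rw [← pow_add]
          congr 1
          omega
        rw [heq, ← pow_mul, hexp]
      · refine ⟨k₀, le_refl _, Or.inl ?_⟩
        by_contra h
        push_neg at h
        exact hgT ((Subgroup.mem_pi _).mpr fun v _ => h v)
    have hC := fun v => lemC p k hp (T v) ⟨nn v, ⟨e v⟩⟩ (hk₀ k hk₀k v) (g v)
    choose Q i1 i2 hQ φ ha hb using hC
    letI : ∀ v, Group (Q v) := i1
    haveI : ∀ v, Finite (Q v) := i2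
    set Φ : (∀ v, P v) →* (∀ v, Q v) :=
      Pi.monoidHom (fun v => (φ v).comp (Pi.evalMonoidHom P v)) with hΦ
    refine ⟨Φ.ker, MonoidHom.normal_ker Φ, ?_, ?_⟩
    · rw [Subgroup.index_ker]
      have hPG : IsPGroup p Φ.range := (isPGroup_pi Q hQ).to_subgroup Φ.range
      obtain ⟨m, hm⟩ := (IsPGroup.iff_card).mp hPG
      exact ⟨m, hm⟩
    · intro x hx hgxZ
      have hΦx : Φ x = 1 := MonoidHom.mem_ker.mp hx
      rcases hprop with ⟨v₀, hv₀⟩ | ⟨hgT, hPk⟩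
      · have hx0 : φ v₀ (x v₀) = 1 := congrFun hΦx v₀
        have h1 : φ v₀ (g v₀) = φ v₀ (g v₀ * x v₀) := by
          rw [map_mul, hx0, mul_one]
        exact hb v₀ hv₀ (g v₀ * x v₀)
          ((Subgroup.mem_pi _).mp (hZ hgxZ) v₀ trivial) h1
      · have hxT : x ∈ T' := by
          have hxe : x = g⁻¹ * (g * x) := by group
          rw [hxe]
          exact mul_mem (inv_mem hgT) (hZ hgxZ)
        have hxv : ∀ v, ∃ u ∈ T v, u ^ (p ^ k) = x v := by
          intro v
          exact ha v (x v) ((Subgroup.mem_pi _).mp hxT v trivial) (congrFun hΦx v)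
        choose u hu hupow using hxv
        have hgeq : g = (g * x) * (fun v => (u v)⁻¹) ^ (p ^ k) := by
          funext v
          show g v = (g v * x v) * ((u v)⁻¹) ^ (p ^ k)
          rw [inv_pow, hupow v, mul_assoc, mul_inv_cancel, mul_one]
        exact hPk (g * x) hgxZ _
          ((Subgroup.mem_pi _).mpr fun v _ => inv_mem (hu v)) hgeq
  exact ⟨h1, fun hZn => part2 p hp Z h1 hZn⟩
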